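/- arXiv:2106.15667 — 2 statements merged into one kernel-verified Lean document; each statement's English description precedes it below -/
import Mathlib

section
/- Let K be a quadratic field with Galois group G = {1, σ} of order 2 over ℚ, and let K₊* be the group of totally positive elements of K*. Then the first group cohomology H¹(G, K₊*) vanishes. -/
open NumberField

/-- The subgroup of totally positive elements of `Kˣ`. -/
def totallyPositiveUnits (K : Type*) [Field K] : Subgroup Kˣ where
  carrier := {x | ∀ φ : K →+* ℝ, 0 < φ x}
  one_mem' := fun φ => by simp
  mul_mem' := by
    intro a b ha hb φ
    rw [Units.val_mul, map_mul]
    exact mul_pos (ha φ) (hb φ)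
  inv_mem' := by
    intro a ha φ
    rw [Units.val_inv_eq_inv_val, map_inv₀]
    exact inv_pos.2 (ha φ)

/-- `H¹(G, K₊*) = 0` for a quadratic field `K` with Galois group `G = {1, σ}`:
in the multiplicative `G`-module `K₊*` of totally positive elements, the kernel of
`1 + σ` (i.e. `x ↦ x·σ(x)`) coincides with the image of `1 − σ` (i.e. `y ↦ y·σ(y)⁻¹`),
so `H¹(G, K₊*) = ker(1+σ)/im(1−σ)` vanishes. -/
theorem h1_totally_positive_vanishes (K : Type*) [Field K] [NumberField K]
    (hK : Module.finrank ℚ K = 2)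
    (σ : K ≃ₐ[ℚ] K) (hσ : σ ≠ AlgEquiv.refl) (hinv : ∀ a : K, σ (σ a) = a) :
    ∀ x ∈ totallyPositiveUnits K,
      (x * Units.map σ.toAlgHom.toRingHom.toMonoidHom x = 1 ↔
        ∃ y ∈ totallyPositiveUnits K,
          x = y * (Units.map σ.toAlgHom.toRingHom.toMonoidHom y)⁻¹) := by
  intro x hx
  constructor
  · intro h
    have hc : ∀ z : K, σ.toAlgHom.toRingHom.toMonoidHom z = σ z := fun z => rfl
    have hval : x.val * σ x.val = 1 := by
      have := congrArg Units.val h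
      simpa using this
    by_cases h1 : (1 : K) + x.val = 0
    · -- degenerate case: x = -1, so there are no real embeddings
      have hx1 : x.val = -1 := by linear_combination h1
      obtain ⟨a, ha⟩ : ∃ a : K, σ a ≠ a := by
        by_contra hc
        push_neg at hc
        exact hσ (AlgEquiv.ext fun a => by simpa using hc a)
      have hy0 : a - σ a ≠ 0 := fun h0 => ha (by linear_combination -h0)
      refine ⟨Units.mk0 (a - σ a) hy0, ?_, ?_⟩
      · intro φ
        have := hx φ
        rw [hx1] at this
        simp at this
        exact absurd this (by norm_num)
      · apply Units.ext
        rw [Units.val_mul, Units.val_inv_eq_inv_val]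
        simp only [Units.coe_map, Units.val_mk0, hc]
        rw [map_sub, hinv]
        rw [hx1]
        have h0 : σ a - a ≠ 0 := fun h0 => ha (by linear_combination h0)
        field_simp
        ring
    · refine ⟨Units.mk0 (1 + x.val) h1, ?_, ?_⟩
      · intro φ
        have := hx φ
        simp only [Units.val_mk0, map_add, map_one]
        linarith
      · apply Units.ext
        rw [Units.val_mul, Units.val_inv_eq_inv_val]
        simp only [Units.coe_map, Units.val_mk0, hc]
        rw [map_add, map_one]
        have h2 : (1 : K) + σ x.val ≠ 0 := by
          intro h0
          apply h1
          have hxv : x.val = -1 := by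
            have : σ x.val = -1 := by linear_combination h0
            rw [this] at hval
            linear_combination -hval
          rw [hxv]; ring
        field_simp
        linear_combination hval
  · rintro ⟨y, hy, rfl⟩
    set m := Units.map σ.toAlgHom.toRingHom.toMonoidHom y with hm
    have hmap : Units.map σ.toAlgHom.toRingHom.toMonoidHom m = y := by
      have hc : ∀ z : K, σ.toAlgHom.toRingHom.toMonoidHom z = σ z := fun z => rfl
      apply Units.ext
      simp [hm, hc, hinv]
    rw [map_mul, map_inv, hmap]
    group
    simp [hm]
end

section
/- Let K be a quadratic field with Galois group G of order 2. Then H¹(G, K₊*/O₊*) = 0, where O₊* is the group of totally positive units. -/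
open NumberField

/-- The subgroup `O₊*` of `Kˣ`: totally positive units of the ring of integers. -/
def totallyPositiveIntegerUnits (K : Type*) [Field K] [NumberField K] : Subgroup Kˣ where
  carrier := {x | (∃ u : (𝓞 K)ˣ, algebraMap (𝓞 K) K u = (x : K)) ∧ ∀ φ : K →+* ℝ, 0 < φ x}
  one_mem' := ⟨⟨1, by simp⟩, fun φ => by simp⟩
  mul_mem' := by
    rintro a b ⟨⟨u, hu⟩, ha⟩ ⟨⟨v, hv⟩, hb⟩
    refine ⟨⟨u * v, ?_⟩, fun φ => ?_⟩
    · rw [Units.val_mul, map_mul, hu, hv, Units.val_mul]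
    · rw [Units.val_mul, map_mul]
      exact mul_pos (ha φ) (hb φ)
  inv_mem' := by
    rintro a ⟨⟨u, hu⟩, ha⟩
    refine ⟨⟨u⁻¹, ?_⟩, fun φ => ?_⟩
    · rw [Units.val_inv_eq_inv_val, map_units_inv, hu]
    · rw [Units.val_inv_eq_inv_val, map_inv₀]
      exact inv_pos.2 (ha φ)

lemma mem_tpu_iff {K : Type*} [Field K] {x : Kˣ} :
    x ∈ totallyPositiveUnits K ↔ ∀ φ : K →+* ℝ, 0 < φ x := Iff.rfl

lemma mem_tpiu_iff {K : Type*} [Field K] [NumberField K] {x : Kˣ} :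
    x ∈ totallyPositiveIntegerUnits K ↔
      (∃ u : (𝓞 K)ˣ, algebraMap (𝓞 K) K u = (x : K)) ∧ ∀ φ : K →+* ℝ, 0 < φ x := Iff.rfl

/-- `σ` preserves `O₊*`. -/
lemma sigma_mem_tpiu {K : Type*} [Field K] [NumberField K] (σ : K ≃ₐ[ℚ] K) {u : Kˣ}
    (hu : u ∈ totallyPositiveIntegerUnits K) :
    Units.map σ.toAlgHom.toRingHom.toMonoidHom u ∈ totallyPositiveIntegerUnits K := by
  obtain ⟨⟨w, hw⟩, hpos⟩ := hu
  refine ⟨⟨Units.map (galRestrict ℤ ℚ K (𝓞 K) σ).toAlgHom.toRingHom.toMonoidHom w, ?_⟩,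
    fun φ => ?_⟩
  · show algebraMap (𝓞 K) K (galRestrict ℤ ℚ K (𝓞 K) σ (w : 𝓞 K)) = σ (u : K)
    rw [algebraMap_galRestrict_apply, hw]
  · exact hpos (φ.comp σ.toAlgHom.toRingHom)

set_option maxHeartbeats 1000000 in
/-- `H¹(G, K₊*/O₊*) = 0` for a quadratic field `K` with `G = {1, σ}`: in the quotient
`G`-module `K₊*/O₊*`, the class of `x` is killed by `1 + σ` (i.e. `x·σ(x) ∈ O₊*`) if and
only if it lies in the image of `1 − σ` (i.e. `x ≡ y·σ(y)⁻¹ mod O₊*` for some `y ∈ K₊*`). -/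
theorem h1_Kpos_mod_Opos_vanishes (K : Type*) [Field K] [NumberField K]
    (hK : Module.finrank ℚ K = 2)
    (σ : K ≃ₐ[ℚ] K) (hσ : σ ≠ AlgEquiv.refl) (hinv : ∀ a : K, σ (σ a) = a) :
    ∀ x ∈ totallyPositiveUnits K,
      (x * Units.map σ.toAlgHom.toRingHom.toMonoidHom x ∈ totallyPositiveIntegerUnits K ↔
        ∃ y ∈ totallyPositiveUnits K,
          x * (y * (Units.map σ.toAlgHom.toRingHom.toMonoidHom y)⁻¹)⁻¹ ∈
            totallyPositiveIntegerUnits K) := by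
  intro x hx
  set S : Kˣ →* Kˣ := Units.map σ.toAlgHom.toRingHom.toMonoidHom with hS
  have hSval : ∀ z : Kˣ, ((S z : Kˣ) : K) = σ (z : K) := fun z => rfl
  have hSS : ∀ z : Kˣ, S (S z) = z := fun z => Units.ext (by simp [hSval, hinv])
  -- an element of K not fixed by σ
  obtain ⟨c, hc⟩ : ∃ c : K, σ c ≠ c := by
    by_contra hcon
    push_neg at hcon
    exact hσ (AlgEquiv.ext fun a => hcon a)
  constructor
  · -- forward direction
    intro h
    set u : Kˣ := x * S x with hu
    have huval : (u : K) = (x : K) * σ (x : K) := by simp [hu, hSval]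
    -- u is fixed by σ
    have hfix : σ (u : K) = (u : K) := by
      rw [huval, map_mul, hinv, mul_comm]
    -- u is rational
    have hrat : ∃ q : ℚ, algebraMap ℚ K q = (u : K) := by
      set E : Subalgebra ℚ K := AlgHom.equalizer σ.toAlgHom (AlgHom.id ℚ K) with hE
      have hEne : E ≠ ⊤ := by
        intro htop
        have : c ∈ E := htop.symm ▸ Algebra.mem_top
        exact hc this
      have h1 : Module.finrank ℚ E < 2 := by
        rw [← hK]
        exact Submodule.finrank_lt (s := Subalgebra.toSubmodule E) (by
          rwa [ne_eq, Algebra.toSubmodule_eq_top])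
      have h2 : 0 < Module.finrank ℚ E := Module.finrank_pos
      have h3 : Module.finrank ℚ E = 1 := by omega
      have hbot : E = ⊥ := Subalgebra.eq_bot_of_finrank_one h3
      have humem : (u : K) ∈ E := hfix
      rw [hbot, Algebra.mem_bot] at humem
      obtain ⟨q, hq⟩ := humem
      exact ⟨q, hq⟩
    obtain ⟨q, hq⟩ := hrat
    obtain ⟨⟨w, hw⟩, hpos⟩ := h
    -- q is a rational integer
    have hint : IsIntegral ℤ (u : K) := by
      rw [← hw]; exact RingOfIntegers.isIntegral_coe _
    have hintq : IsIntegral ℤ q := IsIntegral.tower_bot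
      ((algebraMap ℚ K).injective) (hq ▸ hint)
    obtain ⟨n, hn⟩ := IsIntegrallyClosed.isIntegral_iff.mp hintq
    have hintinv : IsIntegral ℤ ((u : K)⁻¹) := by
      have : algebraMap (𝓞 K) K ((w⁻¹ : (𝓞 K)ˣ) : 𝓞 K) = (u : K)⁻¹ := by
        have h1 : algebraMap (𝓞 K) K ((w : 𝓞 K) * ((w⁻¹ : (𝓞 K)ˣ) : 𝓞 K)) = 1 := by
          rw [← Units.val_mul, mul_inv_cancel]; simp
        rw [map_mul, hw] at h1
        field_simp at h1 ⊢
        rw [← h1]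
      rw [← this]; exact RingOfIntegers.isIntegral_coe _
    have hq0 : q ≠ 0 := by
      intro h0
      apply Units.ne_zero u
      rw [← hq, h0, map_zero]
    have hintqinv : IsIntegral ℤ q⁻¹ := by
      refine IsIntegral.tower_bot ((algebraMap ℚ K).injective) ?_
      rwa [map_inv₀, hq]
    obtain ⟨m, hm⟩ := IsIntegrallyClosed.isIntegral_iff.mp hintqinv
    have hnm : n * m = 1 := by
      have : (n : ℚ) * (m : ℚ) = 1 := by
        rw [show ((n : ℤ) : ℚ) = algebraMap ℤ ℚ n from rfl,
          show ((m : ℤ) : ℚ) = algebraMap ℤ ℚ m from rfl, hn, hm]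
        field_simp
      exact_mod_cast this
    have hn1 : n = 1 ∨ n = -1 := Int.isUnit_iff.mp (IsUnit.of_mul_eq_one (b := m) hnm)
    -- rule out u = -1
    have huq : (u : K) = (n : ℚ) := by
      rw [← hq, ← hn]; rfl
    have hu1 : (u : K) = 1 := by
      rcases hn1 with h1 | h1
      · rw [huq, h1]; norm_num
      · exfalso
        have hum1 : (u : K) = -1 := by rw [huq, h1]; norm_num
        by_cases hφ : Nonempty (K →+* ℝ)
        · obtain ⟨φ⟩ := hφ
          have h2 := hpos φ
          rw [hum1] at h2
          rw [map_neg, map_one] at h2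
          linarith
        · -- no real embedding: use a complex embedding
          have hcard : Fintype.card (K →+* ℂ) = 2 := by
            rw [NumberField.Embeddings.card K ℂ, hK]
          have hne : Nonempty (K →+* ℂ) := by
            rw [← Fintype.card_pos_iff, hcard]; norm_num
          obtain ⟨ψ⟩ := hne
          set τ : K →+* ℂ := ψ.comp σ.toAlgHom.toRingHom with hτ
          set χ : K →+* ℂ := NumberField.ComplexEmbedding.conjugate ψ with hχ
          have hψτ : ψ ≠ τ := by
            intro heq
            apply hc
            have := RingHom.congr_fun heq c
            exact (ψ.injective (this.symm)).symm ▸ rfl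
          have hψχ : ψ ≠ χ := by
            intro heq
            exact hφ ⟨(NumberField.ComplexEmbedding.isReal_iff.mpr heq.symm).embedding⟩
          have hτχ : τ = χ := by
            have hlt : Fintype.card (K →+* ℂ) < 3 := by rw [hcard]; norm_num
            obtain ⟨i, j, hij, hfij⟩ :=
              Fintype.exists_ne_map_eq_of_card_lt (![ψ, τ, χ] : Fin 3 → (K →+* ℂ)) hlt
            fin_cases i <;> fin_cases j <;> simp_all
          have : ψ ((u : K)) = ψ (x : K) * (starRingEnd ℂ) (ψ (x : K)) := by
            rw [huval, map_mul]
            congr 1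
            have := RingHom.congr_fun hτχ (x : K)
            simpa [hτ, hχ, NumberField.ComplexEmbedding.conjugate] using this
          rw [hum1, Complex.mul_conj] at this
          have hre : (-1 : ℝ) = Complex.normSq (ψ (x : K)) := by
            have := congrArg Complex.re this
            simpa using this
          nlinarith [Complex.normSq_nonneg (ψ (x : K)), hre]
    -- now x * σ x = 1
    have hxsx : (x : K) * σ (x : K) = 1 := by rw [← huval, hu1]
    by_cases hxm1 : (x : K) = -1
    · -- degenerate case: no real embedding can exist
      have hy0 : c - σ c ≠ 0 := fun h => hc (by rw [sub_eq_zero] at h; exact h.symm)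
      refine ⟨Units.mk0 (c - σ c) hy0, ?_, ?_⟩
      · intro φ
        exfalso
        have h2 := hx φ
        rw [hxm1, map_neg, map_one] at h2
        linarith
      · have : x * (Units.mk0 (c - σ c) hy0 * (S (Units.mk0 (c - σ c) hy0))⁻¹)⁻¹ = 1 := by
          apply Units.ext
          have hσy : σ (c - σ c) = -(c - σ c) := by
            rw [map_sub, hinv]; ring
          simp only [Units.val_mul, Units.val_inv_eq_inv_val, hSval, Units.val_mk0,
            Units.val_one, hσy, hxm1]
          field_simp
        rw [this]
        exact one_mem _
    · -- main case: y = x + 1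
      have hy0 : (x : K) + 1 ≠ 0 := fun h => hxm1 (by linear_combination h)
      refine ⟨Units.mk0 ((x : K) + 1) hy0, ?_, ?_⟩
      · intro φ
        have := hx φ
        rw [Units.val_mk0, map_add, map_one]
        linarith
      · have : x * (Units.mk0 ((x : K) + 1) hy0 * (S (Units.mk0 ((x : K) + 1) hy0))⁻¹)⁻¹ = 1 := by
          apply Units.ext
          simp only [Units.val_mul, Units.val_inv_eq_inv_val, hSval, Units.val_mk0,
            Units.val_one, map_add, map_one]
          have hσx0 : σ (x : K) + 1 ≠ 0 := by
            intro h0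
            have : σ (x : K) = -1 := by linear_combination h0
            rw [this] at hxsx
            apply hxm1
            linear_combination -hxsx
          field_simp
          linear_combination hxsx
        rw [this]
        exact one_mem _
  · -- reverse direction
    rintro ⟨y, hy, hmem⟩
    set v : Kˣ := x * (y * (S y)⁻¹)⁻¹ with hv
    have hSv : S v ∈ totallyPositiveIntegerUnits K := sigma_mem_tpiu σ hmem
    have hSv' : S v = S x * (S y * y⁻¹)⁻¹ := by
      rw [hv, map_mul, map_inv, map_mul, map_inv, hSS]
    have h2 : (y * (S y)⁻¹) * (S y * y⁻¹) = 1 := by group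
    have hprod : v * S v = x * S x := by
      rw [hv, hSv', mul_mul_mul_comm, ← mul_inv, h2, inv_one, mul_one]
    rw [← hprod]
    exact mul_mem hmem hSv
end
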